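/- Contraction property of the MIMO waterfilling mapping: Let WF_q(Q_{−q}) = [−(H_{qq}ᴴ R_{−q}(Q_{−q})⁻¹ H_{qq})⁻¹]_{Q_q} be the projection-form waterfilling where R_{−q}(Q_{−q}) = R_{n_q} + Σ_{r≠q} H_{rq} Q_r H_{rq}ᴴ, with R_{n_q} ≻ 0 and H_{qq} invertible. Then for all feasible profiles Q⁽¹⁾, Q⁽²⁾ and each q, ‖WF_q(Q_{−q}⁽¹⁾) − WF_q(Q_{−q}⁽²⁾)‖_F ≤ Σ_{r≠q} ρ(H_{rq}ᴴ H_{qq}^{−H} H_{qq}^{−1} H_{rq}) ‖Q_r⁽¹⁾ − Q_r⁽²⁾‖_F. -/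

import Mathlib

open scoped ComplexOrder Matrix

noncomputable def frobNorm {n m : ℕ} (X : Matrix (Fin n) (Fin m) ℂ) : ℝ :=
  Real.sqrt (∑ i, ∑ j, ‖X i j‖ ^ 2)

noncomputable def specRad {m : ℕ} (A : Matrix (Fin m) (Fin m) ℂ) : ℝ :=
  ⨆ μ : spectrum ℂ A, ‖(μ : ℂ)‖

namespace MimoAux

open Matrix

noncomputable def frobSq {a b : ℕ} (X : Matrix (Fin a) (Fin b) ℂ) : ℝ :=
  ∑ i, ∑ j, ‖X i j‖ ^ 2

lemma frobNorm_eq {a b : ℕ} (X : Matrix (Fin a) (Fin b) ℂ) :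
    frobNorm X = Real.sqrt (frobSq X) := rfl

lemma frobSq_nonneg {a b : ℕ} (X : Matrix (Fin a) (Fin b) ℂ) : 0 ≤ frobSq X :=
  Finset.sum_nonneg fun _ _ => Finset.sum_nonneg fun _ _ => sq_nonneg _

lemma frobSq_conjTranspose {a b : ℕ} (X : Matrix (Fin a) (Fin b) ℂ) :
    frobSq Xᴴ = frobSq X := by
  unfold frobSq
  rw [Finset.sum_comm]
  simp [conjTranspose_apply]

lemma frobSq_eq_re_trace {a b : ℕ} (X : Matrix (Fin a) (Fin b) ℂ) :
    frobSq X = (Matrix.trace (Xᴴ * X)).re := by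
  simp only [Matrix.trace, Matrix.diag, Matrix.mul_apply, conjTranspose_apply, Complex.re_sum,
    frobSq]
  rw [Finset.sum_comm]
  refine Finset.sum_congr rfl fun j _ => Finset.sum_congr rfl fun i _ => ?_
  rw [Complex.star_def, Complex.sq_norm, ← Complex.normSq_eq_conj_mul_self]
  simp

lemma re_trace_nonneg {m : ℕ} {S : Matrix (Fin m) (Fin m) ℂ} (hS : S.PosSemidef) :
    0 ≤ (Matrix.trace S).re := by
  have h : ∀ i, (0:ℂ) ≤ S i i := fun i => by
    exact hS.diag_nonneg
  have h2 : (0:ℂ) ≤ Matrix.trace S := Finset.sum_nonneg fun i _ => h i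
  exact (Complex.le_def.mp h2).1

lemma frobSq_mul_le {a b k : ℕ} (A : Matrix (Fin a) (Fin b) ℂ) {ρ : ℝ}
    (hρ : (((ρ : ℂ) • (1 : Matrix (Fin b) (Fin b) ℂ)) - Aᴴ * A).PosSemidef)
    (M : Matrix (Fin b) (Fin k) ℂ) : frobSq (A * M) ≤ ρ * frobSq M := by
  have h1 := re_trace_nonneg (hρ.conjTranspose_mul_mul_same M)
  have e : Mᴴ * (((ρ : ℂ) • (1 : Matrix (Fin b) (Fin b) ℂ)) - Aᴴ * A) * M
      = (ρ : ℂ) • (Mᴴ * M) - (A * M)ᴴ * (A * M) := by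
    simp only [Matrix.mul_sub, Matrix.sub_mul, Matrix.mul_smul, Matrix.mul_one,
      Matrix.smul_mul, conjTranspose_mul, Matrix.mul_assoc]
  rw [e, Matrix.trace_sub, Matrix.trace_smul] at h1
  have h2 : ((ρ : ℂ) • Matrix.trace (Mᴴ * M)).re = ρ * (Matrix.trace (Mᴴ * M)).re := by
    simp [Complex.real_smul]
  rw [Complex.sub_re, h2] at h1
  rw [frobSq_eq_re_trace, frobSq_eq_re_trace]
  linarith

lemma specRad_nonneg {m : ℕ} (A : Matrix (Fin m) (Fin m) ℂ) : 0 ≤ specRad A :=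
  Real.iSup_nonneg fun _ => norm_nonneg _

lemma smul_one_sub_posSemidef {m : ℕ} {B : Matrix (Fin m) (Fin m) ℂ} (hB : B.PosSemidef) :
    (((specRad B : ℝ) : ℂ) • (1 : Matrix (Fin m) (Fin m) ℂ) - B).PosSemidef := by
  have hH := hB.isHermitian
  have hbdd : BddAbove (Set.range fun μ : spectrum ℂ B => ‖(μ : ℂ)‖) :=
    (Set.finite_range _).bddAbove
  have heig : ∀ i, hH.eigenvalues i ≤ specRad B := by
    intro i
    have h1 : ((hH.eigenvalues i : ℝ) : ℂ) ∈ spectrum ℂ B :=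
      spectrum.algebraMap_mem ℂ (hH.eigenvalues_mem_spectrum_real i)
    calc hH.eigenvalues i ≤ ‖((hH.eigenvalues i : ℝ) : ℂ)‖ := by
          rw [Complex.norm_real]; exact le_abs_self _
      _ ≤ specRad B := le_ciSup hbdd (⟨_, h1⟩ : spectrum ℂ B)
  have key : ((specRad B : ℂ) • (1 : Matrix (Fin m) (Fin m) ℂ) - B)
      = (hH.eigenvectorUnitary : Matrix (Fin m) (Fin m) ℂ) *
        (Matrix.diagonal fun i => ((specRad B - hH.eigenvalues i : ℝ) : ℂ)) *
        (hH.eigenvectorUnitary : Matrix (Fin m) (Fin m) ℂ)ᴴ := by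
    have hU : (hH.eigenvectorUnitary : Matrix (Fin m) (Fin m) ℂ) *
        (hH.eigenvectorUnitary : Matrix (Fin m) (Fin m) ℂ)ᴴ = 1 := by
      simpa [Matrix.star_eq_conjTranspose] using
        Matrix.mem_unitaryGroup_iff.mp hH.eigenvectorUnitary.2
    have hdiag : (Matrix.diagonal fun i => ((specRad B - hH.eigenvalues i : ℝ) : ℂ))
        = (specRad B : ℂ) • (1 : Matrix (Fin m) (Fin m) ℂ)
          - Matrix.diagonal (RCLike.ofReal ∘ hH.eigenvalues) := by
      ext i j
      by_cases hij : i = j <;>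
        simp [Matrix.diagonal_apply, Matrix.one_apply, hij, Complex.ofReal_sub]
    rw [hdiag, Matrix.mul_sub, Matrix.sub_mul, Matrix.mul_smul, Matrix.mul_one, Matrix.smul_mul,
      hU]
    congr 1
    conv_lhs => rw [hH.spectral_theorem]
    rw [Unitary.conjStarAlgAut_apply, Matrix.star_eq_conjTranspose]
  rw [key]
  have hd : (0 : Fin m → ℂ) ≤ fun i => ((specRad B - hH.eigenvalues i : ℝ) : ℂ) := by
    refine Pi.le_def.mpr fun i => ?_
    simp only [Pi.zero_apply]
    rw [← Complex.ofReal_zero, Complex.real_le_real]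
    linarith [heig i]
  exact (Matrix.PosSemidef.diagonal hd).mul_mul_conjTranspose_same _

lemma frob_sandwich {a b : ℕ} (A : Matrix (Fin a) (Fin b) ℂ) (Δ : Matrix (Fin b) (Fin b) ℂ) :
    frobNorm (A * Δ * Aᴴ) ≤ specRad (Aᴴ * A) * frobNorm Δ := by
  set ρ := specRad (Aᴴ * A) with hρdef
  have hρ0 : 0 ≤ ρ := specRad_nonneg _
  have hP := smul_one_sub_posSemidef (Matrix.posSemidef_conjTranspose_mul_self A)
  have h1 : frobSq (A * (Δ * Aᴴ)) ≤ ρ * frobSq (Δ * Aᴴ) := frobSq_mul_le A hP _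
  have h2 : frobSq (Δ * Aᴴ) = frobSq (A * Δᴴ) := by
    rw [← frobSq_conjTranspose (Δ * Aᴴ), conjTranspose_mul, conjTranspose_conjTranspose]
  have h3 : frobSq (A * Δᴴ) ≤ ρ * frobSq Δᴴ := frobSq_mul_le A hP _
  have h4 : frobSq Δᴴ = frobSq Δ := frobSq_conjTranspose Δ
  have h5 : frobSq (A * Δ * Aᴴ) ≤ ρ ^ 2 * frobSq Δ := by
    rw [Matrix.mul_assoc]
    nlinarith [frobSq_nonneg (Δ * Aᴴ), frobSq_nonneg (A * Δᴴ)]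
  calc frobNorm (A * Δ * Aᴴ) = Real.sqrt (frobSq (A * Δ * Aᴴ)) := rfl
    _ ≤ Real.sqrt (ρ ^ 2 * frobSq Δ) := Real.sqrt_le_sqrt h5
    _ = ρ * frobNorm Δ := by
        rw [Real.sqrt_mul (sq_nonneg ρ), Real.sqrt_sq hρ0, frobNorm_eq]

/-- Flatten a matrix into Euclidean space, as a real-linear map. -/
noncomputable def toE {a b : ℕ} : Matrix (Fin a) (Fin b) ℂ →ₗ[ℝ] EuclideanSpace ℂ (Fin a × Fin b) where
  toFun X := (WithLp.equiv 2 _).symm fun p => X p.1 p.2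
  map_add' X Y := rfl
  map_smul' c X := rfl

lemma norm_toE {a b : ℕ} (X : Matrix (Fin a) (Fin b) ℂ) : ‖toE X‖ = frobNorm X := by
  rw [EuclideanSpace.norm_eq, frobNorm]
  congr 1
  rw [Fintype.sum_prod_type]
  rfl

attribute [local instance] InnerProductSpace.complexToReal

open scoped RealInnerProductSpace

lemma proj_contr {F : Type*} [NormedAddCommGroup F] [InnerProductSpace ℝ F] {K : Set F}
    (hK : Convex ℝ K) {x1 x2 p1 p2 : F} (hp1 : p1 ∈ K) (hp2 : p2 ∈ K)
    (h1 : ∀ z ∈ K, ‖p1 - x1‖ ≤ ‖z - x1‖) (h2 : ∀ z ∈ K, ‖p2 - x2‖ ≤ ‖z - x2‖) :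
    ‖p1 - p2‖ ≤ ‖x1 - x2‖ := by
  have hbdd : ∀ x : F, BddBelow (Set.range fun w : K => ‖x - (w : F)‖) :=
    fun x => ⟨0, fun r ⟨w, hw⟩ => hw ▸ norm_nonneg _⟩
  have hmin : ∀ (x p : F), p ∈ K → (∀ z ∈ K, ‖p - x‖ ≤ ‖z - x‖) →
      ‖x - p‖ = ⨅ w : K, ‖x - (w : F)‖ := by
    intro x p hp h
    haveI : Nonempty K := ⟨⟨p, hp⟩⟩
    refine le_antisymm (le_ciInf fun w => ?_) (ciInf_le (hbdd x) (⟨p, hp⟩ : K))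
    rw [norm_sub_rev x p, norm_sub_rev x _]
    exact h w w.2
  have hv1 := (norm_eq_iInf_iff_real_inner_le_zero hK hp1).mp (hmin x1 p1 hp1 h1) p2 hp2
  have hv2 := (norm_eq_iInf_iff_real_inner_le_zero hK hp2).mp (hmin x2 p2 hp2 h2) p1 hp1
  have key : ‖p1 - p2‖ ^ 2 ≤ ⟪x1 - x2, p1 - p2⟫ := by
    have e : (p1 - x1) + (x1 - x2) + (x2 - p2) = p1 - p2 := by abel
    have : ⟪p1 - p2, p1 - p2⟫
        = ⟪p1 - x1, p1 - p2⟫ + ⟪x1 - x2, p1 - p2⟫ + ⟪x2 - p2, p1 - p2⟫ := by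
      rw [← inner_add_left, ← inner_add_left, e]
    have e1 : ⟪p1 - x1, p1 - p2⟫ = ⟪x1 - p1, p2 - p1⟫ := by
      rw [show p1 - x1 = -(x1 - p1) by abel, show p1 - p2 = -(p2 - p1) by abel,
        inner_neg_neg]
    rw [real_inner_self_eq_norm_sq] at this
    rw [this, e1]
    linarith
  have hcs : ⟪x1 - x2, p1 - p2⟫ ≤ ‖x1 - x2‖ * ‖p1 - p2‖ := real_inner_le_norm _ _
  nlinarith [norm_nonneg (p1 - p2), norm_nonneg (x1 - x2)]

lemma frobNorm_sum_le {a b : ℕ} {ι : Type*} (s : Finset ι)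
    (f : ι → Matrix (Fin a) (Fin b) ℂ) :
    frobNorm (∑ r ∈ s, f r) ≤ ∑ r ∈ s, frobNorm (f r) := by
  rw [← norm_toE, map_sum]
  exact (norm_sum_le _ _).trans (le_of_eq (Finset.sum_congr rfl fun r _ => norm_toE _))

lemma psd_smul {m : ℕ} {M : Matrix (Fin m) (Fin m) ℂ} (hM : M.PosSemidef) {c : ℝ} (hc : 0 ≤ c) :
    (c • M).PosSemidef := by
  have hcM : c • M = (c : ℂ) • M := by
    ext i j
    simp [Complex.real_smul]
  rw [hcM]
  constructor
  · rw [Matrix.IsHermitian, conjTranspose_smul, hM.1.eq]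
    congr 1
    simp
  · intro x
    exact (hM.smul (a := (c : ℂ)) (Complex.zero_le_real.mpr hc)).2 x

lemma frobNorm_sub_rev {a b : ℕ} (X Y : Matrix (Fin a) (Fin b) ℂ) :
    frobNorm (X - Y) = frobNorm (Y - X) := by
  rw [← norm_toE, ← norm_toE, map_sub, map_sub, norm_sub_rev]

end MimoAux

theorem mimo_waterfilling_contraction {Q : ℕ} (n : Fin Q → ℕ)
    (H : (r q : Fin Q) → Matrix (Fin (n q)) (Fin (n r)) ℂ)
    (Rn : (q : Fin Q) → Matrix (Fin (n q)) (Fin (n q)) ℂ)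
    (hRn : ∀ q, (Rn q).PosDef) (hH : ∀ q, IsUnit (H q q).det)
    (P : Fin Q → ℝ) (hP : ∀ q, 0 < P q)
    (Q1 Q2 : (r : Fin Q) → Matrix (Fin (n r)) (Fin (n r)) ℂ)
    (hQ1 : ∀ r, (Q1 r).PosSemidef ∧ (Q1 r).trace = (P r : ℂ))
    (hQ2 : ∀ r, (Q2 r).PosSemidef ∧ (Q2 r).trace = (P r : ℂ))
    (W1 W2 : (q : Fin Q) → Matrix (Fin (n q)) (Fin (n q)) ℂ)
    (hW1 : ∀ q, ((W1 q).PosSemidef ∧ (W1 q).trace = (P q : ℂ)) ∧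
      ∀ Z : Matrix (Fin (n q)) (Fin (n q)) ℂ, Z.PosSemidef → Z.trace = (P q : ℂ) →
        frobNorm (W1 q -
          (-((H q q)ᴴ * (Rn q + ∑ r ∈ Finset.univ.erase q, H r q * Q1 r * (H r q)ᴴ)⁻¹ * H q q)⁻¹)) ≤
        frobNorm (Z -
          (-((H q q)ᴴ * (Rn q + ∑ r ∈ Finset.univ.erase q, H r q * Q1 r * (H r q)ᴴ)⁻¹ * H q q)⁻¹)))
    (hW2 : ∀ q, ((W2 q).PosSemidef ∧ (W2 q).trace = (P q : ℂ)) ∧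
      ∀ Z : Matrix (Fin (n q)) (Fin (n q)) ℂ, Z.PosSemidef → Z.trace = (P q : ℂ) →
        frobNorm (W2 q -
          (-((H q q)ᴴ * (Rn q + ∑ r ∈ Finset.univ.erase q, H r q * Q2 r * (H r q)ᴴ)⁻¹ * H q q)⁻¹)) ≤
        frobNorm (Z -
          (-((H q q)ᴴ * (Rn q + ∑ r ∈ Finset.univ.erase q, H r q * Q2 r * (H r q)ᴴ)⁻¹ * H q q)⁻¹))) :
    ∀ q, frobNorm (W1 q - W2 q) ≤
      ∑ r ∈ Finset.univ.erase q,
        specRad ((H r q)ᴴ * ((H q q)⁻¹)ᴴ * (H q q)⁻¹ * H r q) * frobNorm (Q1 r - Q2 r) := by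
  intro q
  classical
  open Matrix MimoAux in
  -- positive definiteness of the interference-plus-noise matrices
  have hsum : ∀ (Qs : (r : Fin Q) → Matrix (Fin (n r)) (Fin (n r)) ℂ),
      (∀ r, (Qs r).PosSemidef) →
      (∑ r ∈ Finset.univ.erase q, H r q * Qs r * (H r q)ᴴ).PosSemidef := by
    intro Qs hQs
    refine Finset.sum_induction _ _ (fun a b ha hb => ha.add hb) Matrix.PosSemidef.zero ?_
    intro r _
    exact (hQs r).mul_mul_conjTranspose_same (H r q)
  have hR1 : (Rn q + ∑ r ∈ Finset.univ.erase q, H r q * Q1 r * (H r q)ᴴ).PosDef :=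
    (hRn q).add_posSemidef (hsum Q1 fun r => (hQ1 r).1)
  have hR2 : (Rn q + ∑ r ∈ Finset.univ.erase q, H r q * Q2 r * (H r q)ᴴ).PosDef :=
    (hRn q).add_posSemidef (hsum Q2 fun r => (hQ2 r).1)
  set R1 := Rn q + ∑ r ∈ Finset.univ.erase q, H r q * Q1 r * (H r q)ᴴ with hR1def
  set R2 := Rn q + ∑ r ∈ Finset.univ.erase q, H r q * Q2 r * (H r q)ᴴ with hR2def
  set T1 := -((H q q)ᴴ * R1⁻¹ * H q q)⁻¹ with hT1def
  set T2 := -((H q q)ᴴ * R2⁻¹ * H q q)⁻¹ with hT2def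
  -- the inversion identity
  have key : ∀ (R : Matrix (Fin (n q)) (Fin (n q)) ℂ), IsUnit R.det →
      -((H q q)ᴴ * R⁻¹ * H q q)⁻¹ = -((H q q)⁻¹ * R * ((H q q)⁻¹)ᴴ) := by
    intro R hRu
    rw [Matrix.mul_inv_rev, Matrix.mul_inv_rev, Matrix.nonsing_inv_nonsing_inv _ hRu,
      Matrix.conjTranspose_nonsing_inv, Matrix.mul_assoc]
  have hU1 : IsUnit R1.det := (Matrix.isUnit_iff_isUnit_det _).mp hR1.isUnit
  have hU2 : IsUnit R2.det := (Matrix.isUnit_iff_isUnit_det _).mp hR2.isUnit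
  -- Step 1: nonexpansiveness of the projection
  have step1 : frobNorm (W1 q - W2 q) ≤ frobNorm (T1 - T2) := by
    letI : InnerProductSpace ℝ (EuclideanSpace ℂ (Fin (n q) × Fin (n q))) :=
      InnerProductSpace.complexToReal
    set K : Set (Matrix (Fin (n q)) (Fin (n q)) ℂ) :=
      {X | X.PosSemidef ∧ X.trace = (P q : ℂ)} with hKdef
    have hconv : Convex ℝ K := by
      intro X hX Y hY a b ha hb hab
      constructor
      · exact (MimoAux.psd_smul hX.1 ha).add (MimoAux.psd_smul hY.1 hb)
      · rw [Matrix.trace_add, Matrix.trace_smul, Matrix.trace_smul, hX.2, hY.2]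
        rw [Complex.real_smul, Complex.real_smul, ← add_mul, ← Complex.ofReal_add, hab]
        simp
    have hKE : Convex ℝ (MimoAux.toE '' K) := hconv.linear_image MimoAux.toE
    have hmem1 : MimoAux.toE (W1 q) ∈ MimoAux.toE '' K :=
      Set.mem_image_of_mem _ ⟨(hW1 q).1.1, (hW1 q).1.2⟩
    have hmem2 : MimoAux.toE (W2 q) ∈ MimoAux.toE '' K :=
      Set.mem_image_of_mem _ ⟨(hW2 q).1.1, (hW2 q).1.2⟩
    have h1 : ∀ z ∈ MimoAux.toE '' K,
        ‖MimoAux.toE (W1 q) - MimoAux.toE T1‖ ≤ ‖z - MimoAux.toE T1‖ := by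
      rintro z ⟨Z, hZ, rfl⟩
      rw [← map_sub, ← map_sub, MimoAux.norm_toE, MimoAux.norm_toE]
      exact (hW1 q).2 Z hZ.1 hZ.2
    have h2 : ∀ z ∈ MimoAux.toE '' K,
        ‖MimoAux.toE (W2 q) - MimoAux.toE T2‖ ≤ ‖z - MimoAux.toE T2‖ := by
      rintro z ⟨Z, hZ, rfl⟩
      rw [← map_sub, ← map_sub, MimoAux.norm_toE, MimoAux.norm_toE]
      exact (hW2 q).2 Z hZ.1 hZ.2
    have := MimoAux.proj_contr hKE hmem1 hmem2 h1 h2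
    rwa [← map_sub, ← map_sub, MimoAux.norm_toE, MimoAux.norm_toE] at this
  -- Step 2: decompose the difference of the targets
  have hdiff : T1 - T2 = ∑ r ∈ Finset.univ.erase q,
      ((H q q)⁻¹ * H r q) * (Q2 r - Q1 r) * ((H q q)⁻¹ * H r q)ᴴ := by
    rw [hT1def, hT2def, key R1 hU1, key R2 hU2, neg_sub_neg, ← Matrix.sub_mul, ← Matrix.mul_sub]
    have hRsub : R2 - R1 = ∑ r ∈ Finset.univ.erase q,
        H r q * (Q2 r - Q1 r) * (H r q)ᴴ := by
      rw [hR1def, hR2def, add_sub_add_left_eq_sub, ← Finset.sum_sub_distrib]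
      refine Finset.sum_congr rfl fun r _ => ?_
      rw [Matrix.mul_sub, Matrix.sub_mul]
    rw [hRsub, Finset.mul_sum, Finset.sum_mul]
    refine Finset.sum_congr rfl fun r _ => ?_
    rw [Matrix.conjTranspose_mul]
    simp only [Matrix.mul_assoc]
  -- Step 3: triangle inequality and sandwich bounds
  calc frobNorm (W1 q - W2 q) ≤ frobNorm (T1 - T2) := step1
    _ ≤ ∑ r ∈ Finset.univ.erase q,
        frobNorm (((H q q)⁻¹ * H r q) * (Q2 r - Q1 r) * ((H q q)⁻¹ * H r q)ᴴ) := by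
        rw [hdiff]; exact MimoAux.frobNorm_sum_le _ _
    _ ≤ ∑ r ∈ Finset.univ.erase q,
        specRad ((H r q)ᴴ * ((H q q)⁻¹)ᴴ * (H q q)⁻¹ * H r q) * frobNorm (Q1 r - Q2 r) := by
        refine Finset.sum_le_sum fun r _ => ?_
        have hsand := MimoAux.frob_sandwich ((H q q)⁻¹ * H r q) (Q2 r - Q1 r)
        rw [MimoAux.frobNorm_sub_rev (Q2 r) (Q1 r)] at hsand
        rw [Matrix.conjTranspose_mul (H q q)⁻¹ (H r q),
          Matrix.mul_assoc ((H r q)ᴴ * ((H q q)⁻¹)ᴴ) ((H q q)⁻¹) (H r q)]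
        rwa [Matrix.conjTranspose_mul (H q q)⁻¹ (H r q)] at hsand
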